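/- Let μ̂ ≥ 0, δ̂ ≥ 0, χ̂ ≥ 0 and real numbers a11, a12, a21, a22 satisfy: a11·a22 − a21·a12 > 0, a11 + a22 < 0, a11·a22 < 0, (δ̂ − a22)(μ̂ − a11) < 0, and (δ̂ − a22)(μ̂ − a11) − a21(a12 + χ̂) > 0. Set Δ2 = μ̂ + δ̂ − a11 − a22 and, for ĉ ∈ ℝ, Δ4(ĉ) = (ĉ² + Δ2²)(δ̂ − a22)(μ̂ − a11) − a21·Δ2²·(a12 + χ̂), and define the threshold ĉ*² = −Δ2²·[(δ̂ − a22)(μ̂ − a11) − a21(a12 + χ̂)] / [(δ̂ − a22)(μ̂ − a11)]. Then ĉ*² > 0, Δ2 > 0, and for every ĉ ∈ ℝ: Δ4(ĉ) > 0 if and only if ĉ² < ĉ*², and Δ4(ĉ) < 0 if and only if ĉ² > ĉ*². In particular the chain of signs of the triad (1, Δ2, Δ4(ĉ)) is (+,+,+) for ĉ² < ĉ*² and (+,+,−) for ĉ² > ĉ*². -/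

import Mathlib

/-- Lemma 1 (Hankel-triad sign-chain lemma): algebraic fact about real parameters. -/
theorem stmt_0 (mu de ch a11 a12 a21 a22 : ℝ)
    (hmu : 0 ≤ mu) (hde : 0 ≤ de) (hch : 0 ≤ ch)
    (h1 : a11 * a22 - a21 * a12 > 0)
    (h2 : a11 + a22 < 0)
    (h3 : a11 * a22 < 0)
    (h4 : (de - a22) * (mu - a11) < 0)
    (h5 : (de - a22) * (mu - a11) - a21 * (a12 + ch) > 0) :
    let Δ2 : ℝ := mu + de - a11 - a22
    let Δ4 : ℝ → ℝ := fun c =>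
      (c ^ 2 + Δ2 ^ 2) * ((de - a22) * (mu - a11)) - a21 * Δ2 ^ 2 * (a12 + ch)
    let cstarSq : ℝ :=
      -Δ2 ^ 2 * ((de - a22) * (mu - a11) - a21 * (a12 + ch)) / ((de - a22) * (mu - a11))
    cstarSq > 0 ∧ Δ2 > 0 ∧
      ∀ c : ℝ, (Δ4 c > 0 ↔ c ^ 2 < cstarSq) ∧ (Δ4 c < 0 ↔ c ^ 2 > cstarSq) := by
  intro Δ2 Δ4 cstarSq
  have hΔ2 : Δ2 > 0 := by simp only [Δ2]; linarith
  set P : ℝ := (de - a22) * (mu - a11) with hP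
  have hK : Δ2 ^ 2 * (P - a21 * (a12 + ch)) > 0 :=
    mul_pos (pow_pos hΔ2 2) h5
  set K : ℝ := Δ2 ^ 2 * (P - a21 * (a12 + ch)) with hKdef
  have hcstar : cstarSq = -K / P := by simp only [cstarSq, hKdef, hP]; ring_nf
  have hΔ4 : ∀ c : ℝ, Δ4 c = c ^ 2 * P + K := by
    intro c; simp only [Δ4, hKdef]; ring
  refine ⟨?_, hΔ2, ?_⟩
  · rw [hcstar]
    exact div_pos_of_neg_of_neg (by linarith) h4
  · intro c
    constructor
    · rw [hΔ4 c, hcstar, lt_div_iff_of_neg h4]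
      constructor <;> intro h <;> nlinarith
    · rw [hΔ4 c, hcstar, gt_iff_lt, div_lt_iff_of_neg h4]
      constructor <;> intro h <;> nlinarith
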